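/- For an origin-symmetric lune K in S²₊ with half-width w ∈ (0, π/2) (so vol(K) = 4w and tan ρ_K(x) = tan(w)/|⟨x,u⟩| for a fixed u ∈ S¹), one has ∫_{S¹} vol(K ∩ ξ^⊥)² dξ = 16 ∫_0^{π/2} arctan²(tan(w)/cos θ) dθ. -/

import Mathlib

open Real

open MeasureTheory in
private lemma lune_aux (w : ℝ) :
    ∀ a b : ℝ, IntervalIntegrable
      (fun θ => (2 * Real.arctan (Real.tan w / |Real.cos θ|)) ^ 2) volume a b := by
  intro a b
  have hmeas : Measurable fun θ : ℝ => (2 * Real.arctan (Real.tan w / |Real.cos θ|)) ^ 2 := by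
    apply Measurable.pow_const
    exact (Real.measurable_arctan.comp ((measurable_const.div
      (Real.continuous_cos.measurable.abs)))).const_mul 2
  apply (intervalIntegrable_const (c := π ^ 2)).mono_fun' hmeas.aestronglyMeasurable
  filter_upwards with x
  have h1 := Real.arctan_lt_pi_div_two (Real.tan w / |Real.cos x|)
  have h2 := Real.neg_pi_div_two_lt_arctan (Real.tan w / |Real.cos x|)
  rw [Real.norm_eq_abs, abs_of_nonneg (sq_nonneg _)]
  nlinarith

/-- For an origin-symmetric lune in `S²₊` with half-width `w ∈ (0, π/2)`, whose radial
function satisfies `tan ρ(θ) = tan w / |cos θ|` (the axis direction taken as angle `0`),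
`∫_{S¹} (2ρ(θ))² dθ = 16 ∫_0^{π/2} arctan²(tan w / cos θ) dθ`. -/
theorem stmt16 (w : ℝ) (hw : w ∈ Set.Ioo 0 (π / 2))
    (ρ : ℝ → ℝ)
    (hρ : ∀ θ, ρ θ = if Real.cos θ = 0 then π / 2
      else Real.arctan (Real.tan w / |Real.cos θ|)) :
    (∫ θ in (0:ℝ)..(2 * π), (2 * ρ θ) ^ 2) =
      16 * ∫ θ in (0:ℝ)..(π / 2), (Real.arctan (Real.tan w / Real.cos θ)) ^ 2 := by
  set F : ℝ → ℝ := fun θ => (2 * Real.arctan (Real.tan w / |Real.cos θ|)) ^ 2 with hF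
  have hint := lune_aux w
  -- Step 1: replace ρ by arctan form a.e.
  have hz : MeasureTheory.volume {θ : ℝ | Real.cos θ = 0} = 0 := by
    have : {θ : ℝ | Real.cos θ = 0} ⊆ Set.range (fun k : ℤ => ((2 * (k:ℝ) + 1) * π / 2)) := by
      intro x hx
      rcases Real.cos_eq_zero_iff.mp hx with ⟨k, hk⟩
      exact ⟨k, hk.symm⟩
    exact MeasureTheory.measure_mono_null this ((Set.countable_range _).measure_zero _)
  have h1 : (∫ θ in (0:ℝ)..(2 * π), (2 * ρ θ) ^ 2) = ∫ θ in (0:ℝ)..(2 * π), F θ := by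
    apply intervalIntegral.integral_congr_ae
    filter_upwards [MeasureTheory.measure_eq_zero_iff_ae_notMem.mp hz] with θ hθ _
    have hc : Real.cos θ ≠ 0 := hθ
    rw [hρ, if_neg hc]
  -- periodicity and reflection
  have hper : ∀ θ, F (θ + π) = F θ := by
    intro θ; simp only [hF, Real.cos_add_pi, abs_neg]
  have hrefl : ∀ θ, F (π - θ) = F θ := by
    intro θ; simp only [hF, Real.cos_pi_sub, abs_neg]
  have h2 : (∫ θ in (π:ℝ)..(2 * π), F θ) = ∫ θ in (0:ℝ)..π, F θ := by
    have := intervalIntegral.integral_comp_add_right (a := (0:ℝ)) (b := π) F π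
    simp only [hper, zero_add] at this
    rw [two_mul]
    exact this.symm
  have h3 : (∫ θ in (π/2:ℝ)..π, F θ) = ∫ θ in (0:ℝ)..(π/2), F θ := by
    have := intervalIntegral.integral_comp_sub_left (a := (0:ℝ)) (b := π/2) F π
    simp only [hrefl, sub_zero] at this
    rw [show π - π/2 = π/2 by ring] at this
    exact this.symm
  have hsplit1 := intervalIntegral.integral_add_adjacent_intervals (hint 0 π) (hint π (2*π))
  have hsplit2 := intervalIntegral.integral_add_adjacent_intervals (hint 0 (π/2)) (hint (π/2) π)
  -- final congruence on [0, π/2]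
  have h4 : (∫ θ in (0:ℝ)..(π/2), F θ)
      = 4 * ∫ θ in (0:ℝ)..(π / 2), (Real.arctan (Real.tan w / Real.cos θ)) ^ 2 := by
    rw [← intervalIntegral.integral_const_mul]
    apply intervalIntegral.integral_congr
    intro θ hθ
    rw [Set.uIcc_of_le (by positivity : (0:ℝ) ≤ π/2)] at hθ
    have hc : 0 ≤ Real.cos θ := by
      apply Real.cos_nonneg_of_mem_Icc
      constructor
      · linarith [hθ.1, Real.pi_pos]
      · exact hθ.2
    simp only [hF, abs_of_nonneg hc]
    ring
  rw [h1, ← hsplit1, h2, ← hsplit2, h3, h4]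
  ring
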